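/- With a₁^±, a₂^±, a₃^± defined from f^±, b^± as above, the Hamiltonian Σₖ₌₁³ {aₖ⁺, aₖ⁻} equals {b⁺, b⁻} (as 5×5 matrices). -/

import Mathlib

open Matrix Complex

noncomputable section

abbrev M5 := Matrix (Fin 5) (Fin 5) ℂ

def E (i j : Fin 5) : M5 := Matrix.single i j 1

def fp : M5 := (Real.sqrt 2 : ℂ) • (E 0 2 - E 2 1)
def fm : M5 := (Real.sqrt 2 : ℂ) • (E 2 0 - E 1 2)
def bp : M5 := (Real.sqrt 2 : ℂ) • (E 2 4 + E 3 2)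
def bm : M5 := (Real.sqrt 2 : ℂ) • (E 2 3 - E 4 2)

def lb (A B : M5) : M5 := A * B - B * A
def ab (A B : M5) : M5 := A * B + B * A

def s3 : ℂ := (Real.sqrt 3 : ℂ)

def aP : Fin 3 → M5 :=
  ![ (1/(2*s3)) • lb (fm - fp) bp,
     (Complex.I/(2*s3)) • lb (fm + fp) bp,
     (1/s3) • bp ]

def aM : Fin 3 → M5 :=
  ![ (1/(2*s3)) • lb (fm - fp) bm,
     (Complex.I/(2*s3)) • lb (fm + fp) bm,
     (1/s3) • bm ]


lemma E_mul (i j k l : Fin 5) : E i j * E k l = if j = k then E i l else 0 := by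
  unfold E
  split
  · next h => subst h; rw [Matrix.single_mul_single_same]; norm_num
  · next h => exact Matrix.single_mul_single_of_ne (c := 1) _ _ _ h 1

lemma h2' : (Real.sqrt 2 : ℂ) * (Real.sqrt 2 : ℂ) = 2 := by
  norm_cast
  rw [Real.mul_self_sqrt (by norm_num : (0:ℝ) ≤ 2)]

lemma h3' : s3 * s3 = 3 := by
  unfold s3; norm_cast
  rw [Real.mul_self_sqrt (by norm_num : (0:ℝ) ≤ 3)]

lemma h2sq : (Real.sqrt 2 : ℂ) ^ 2 = 2 := by rw [sq, h2']

lemma h3sq : s3 ^ 2 = 3 := by rw [sq, h3']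

lemma hs3 : s3 ≠ 0 := by
  intro h
  have := h3'
  rw [h, mul_zero] at this
  exact three_ne_zero this.symm

lemma ha0p : aP 0 = (1/s3) • (-(E 0 4) - E 1 4 - E 3 0 - E 3 1) := by
  show (1/(2*s3)) • lb (fm - fp) bp = _
  unfold lb fm fp bp
  simp only [smul_sub, smul_add, ← smul_neg, ← smul_sub, Matrix.smul_mul, Matrix.mul_smul,
    smul_smul, sub_mul, mul_sub, add_mul, mul_add, E_mul]
  simp (config := { decide := true }) only [h2', reduceIte, smul_smul, smul_sub, smul_add, smul_neg]
  module

lemma ha1p : aP 1 = (Complex.I/s3) • (E 0 4 - E 1 4 - E 3 0 + E 3 1) := by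
  show (Complex.I/(2*s3)) • lb (fm + fp) bp = _
  unfold lb fm fp bp
  simp only [smul_sub, smul_add, ← smul_neg, ← smul_sub, Matrix.smul_mul, Matrix.mul_smul,
    smul_smul, sub_mul, mul_sub, add_mul, mul_add, E_mul]
  simp (config := { decide := true }) only [h2', reduceIte, smul_smul, smul_sub, smul_add, smul_neg]
  module

lemma ha0m : aM 0 = (1/s3) • (-(E 0 3) - E 1 3 + E 4 0 + E 4 1) := by
  show (1/(2*s3)) • lb (fm - fp) bm = _
  unfold lb fm fp bm
  simp only [smul_sub, smul_add, ← smul_neg, ← smul_sub, Matrix.smul_mul, Matrix.mul_smul,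
    smul_smul, sub_mul, mul_sub, add_mul, mul_add, E_mul]
  simp (config := { decide := true }) only [h2', reduceIte, smul_smul, smul_sub, smul_add, smul_neg]
  module

lemma ha1m : aM 1 = (Complex.I/s3) • (E 0 3 - E 1 3 + E 4 0 - E 4 1) := by
  show (Complex.I/(2*s3)) • lb (fm + fp) bm = _
  unfold lb fm fp bm
  simp only [smul_sub, smul_add, ← smul_neg, ← smul_sub, Matrix.smul_mul, Matrix.mul_smul,
    smul_smul, sub_mul, mul_sub, add_mul, mul_add, E_mul]
  simp (config := { decide := true }) only [h2', reduceIte, smul_smul, smul_sub, smul_add, smul_neg]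
  module

lemma t0 : ab (aP 0) (aM 0) = (2/3 : ℂ) • (E 3 3 - E 4 4) := by
  rw [ha0p, ha0m]
  unfold ab
  simp only [Matrix.smul_mul, Matrix.mul_smul, smul_smul, sub_mul, mul_sub, add_mul, mul_add,
    neg_mul, mul_neg, E_mul]
  simp (config := { decide := true }) only [reduceIte, smul_smul, smul_sub, smul_add, smul_neg,
    neg_neg, smul_zero, sub_zero, zero_sub, add_zero, zero_add, neg_zero]
  match_scalars <;> field_simp [hs3, h2'] <;>
    first
    | linear_combination h3'
    | linear_combination -h3'
    | linear_combination 2*h3'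
    | linear_combination -2*h3'
    | ring1
    | (simp only [Complex.I_sq, h2sq, h3sq]; ring1)

lemma t1 : ab (aP 1) (aM 1) = (2/3 : ℂ) • (E 3 3 - E 4 4) := by
  rw [ha1p, ha1m]
  unfold ab
  simp only [Matrix.smul_mul, Matrix.mul_smul, smul_smul, sub_mul, mul_sub, add_mul, mul_add,
    neg_mul, mul_neg, E_mul]
  simp (config := { decide := true }) only [reduceIte, smul_smul, smul_sub, smul_add, smul_neg,
    neg_neg, smul_zero, sub_zero, zero_sub, add_zero, zero_add, neg_zero]
  match_scalars <;> field_simp [hs3, h2'] <;>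
    first
    | linear_combination h3'
    | linear_combination -h3'
    | linear_combination 2*h3'
    | linear_combination -2*h3'
    | ring1
    | (simp only [Complex.I_sq, h2sq, h3sq]; ring1)

lemma t2 : ab (aP 2) (aM 2) = (2/3 : ℂ) • (E 3 3 - E 4 4) := by
  show ab ((1/s3) • bp) ((1/s3) • bm) = _
  unfold ab bp bm
  simp only [Matrix.smul_mul, Matrix.mul_smul, smul_smul, sub_mul, mul_sub, add_mul, mul_add,
    neg_mul, mul_neg, E_mul]
  simp (config := { decide := true }) only [h2', reduceIte, smul_smul, smul_sub, smul_add, smul_neg,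
    neg_neg, smul_zero, sub_zero, zero_sub, add_zero, zero_add, neg_zero]
  match_scalars <;> field_simp [hs3, h2'] <;>
    first
    | linear_combination h3'
    | linear_combination -h3'
    | linear_combination 2*h3'
    | linear_combination -2*h3'
    | ring1
    | (simp only [Complex.I_sq, h2sq, h3sq]; ring1)

lemma rhs_eq : ab bp bm = (2 : ℂ) • (E 3 3 - E 4 4) := by
  unfold ab bp bm
  simp only [Matrix.smul_mul, Matrix.mul_smul, smul_smul, sub_mul, mul_sub, add_mul, mul_add,
    neg_mul, mul_neg, E_mul]
  simp (config := { decide := true }) only [h2', reduceIte, smul_smul, smul_sub, smul_add, smul_neg,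
    neg_neg, smul_zero, sub_zero, zero_sub, add_zero, zero_add, neg_zero]
  module

/-- The Hamiltonian Σₖ {aₖ⁺, aₖ⁻} equals {b⁺, b⁻}. -/
theorem hamiltonian_eq :
    (∑ k : Fin 3, ab (aP k) (aM k)) = ab bp bm := by
  rw [Fin.sum_univ_three, t0, t1, t2, rhs_eq]
  module
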